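/- Let 𝒯, 𝒵, 𝒳, 𝒴 be finite nonempty sets and set 𝒰 = 𝒯×𝒵. Let P_U be a full-support pmf on 𝒰, Q a full-support pmf on 𝒳, and W a channel from 𝒳 to 𝒴 with W(y|x) > 0 for all x,y. For pmfs P̂_U on 𝒰 and P̂_{XY} on 𝒳×𝒴, define K_s(P̂_U) = { pmfs P̃_U on 𝒰 : P̃_Z = P̂_Z and ∑_u P̃_U(u) log P_U(u) ≥ ∑_u P̂_U(u) log P_U(u) } and K_c(P̂_{XY}) = { pmfs P̃_{XY} on 𝒳×𝒴 : P̃_Y = P̂_Y and ∑_{x,y} P̃_{XY}(x,y) log W(y|x) ≥ ∑_{x,y} P̂_{XY}(x,y) log W(y|x) }. Then E := inf over pmfs P̂_U on 𝒰 and pmfs P̂_{XY} on 𝒳×𝒴 of [ D(P̂_U‖P_U) + D(P̂_{XY}‖Q·W) + ( inf over P̃_U ∈ K_s(P̂_U) and P̃_{XY} ∈ K_c(P̂_{XY}) of D(P̃_{XY}‖Q⊗P̂_Y) − (H(P̃_U) − H(P̃_Z)) )⁺ ] satisfies E ≥ inf over pmfs P̂_U and P̂_{XY} of [ D(P̂_U‖P_U)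 + D(P̂_{XY}‖Q·W) + ( D(P̂_{XY}‖Q⊗P̂_Y) − (H(P̂_U) − H(P̂_Z)) )⁺ ]. -/
import Mathlib


open Real BigOperators

/-- A probability mass function on a finite alphabet. -/
def IsPmf {α : Type*} [Fintype α] (p : α → ℝ) : Prop :=
  (∀ a, 0 ≤ p a) ∧ ∑ a, p a = 1

/-- Relative entropy `D(p‖q) = ∑ p log (p/q)` (natural log, `0 log 0 = 0`). -/
noncomputable def klDiv {α : Type*} [Fintype α] (p q : α → ℝ) : ℝ :=
  ∑ a, p a * Real.log (p a / q a)

/-- Shannon entropy `H(p) = −∑ p log p` (natural log, `0 log 0 = 0`). -/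
noncomputable def ent {α : Type*} [Fintype α] (p : α → ℝ) : ℝ :=
  -∑ a, p a * Real.log (p a)

lemma klDiv_eq_sub {α : Type*} [Fintype α] (p q : α → ℝ) (hp : ∀ a, 0 ≤ p a)
    (h : ∀ a, 0 < p a → 0 < q a) :
    klDiv p q = ∑ a, p a * Real.log (p a) - ∑ a, p a * Real.log (q a) := by
  rw [klDiv, ← Finset.sum_sub_distrib]
  refine Finset.sum_congr rfl fun a _ => ?_
  rcases (hp a).eq_or_lt with h0 | h0
  · simp [← h0]
  · rw [Real.log_div h0.ne' (h a h0).ne']; ring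

lemma klDiv_mul_eq {α : Type*} [Fintype α] (p f g : α → ℝ) (hp : ∀ a, 0 ≤ p a)
    (h : ∀ a, 0 < p a → 0 < f a ∧ 0 < g a) :
    klDiv p (fun a => f a * g a)
      = ∑ a, p a * Real.log (p a)
        - (∑ a, p a * Real.log (f a) + ∑ a, p a * Real.log (g a)) := by
  unfold klDiv
  rw [← Finset.sum_add_distrib, ← Finset.sum_sub_distrib]
  refine Finset.sum_congr rfl fun a _ => ?_
  rcases (hp a).eq_or_lt with h0 | h0
  · simp [← h0]
  · obtain ⟨hf, hg⟩ := h a h0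
    rw [Real.log_div h0.ne' (mul_pos hf hg).ne', Real.log_mul hf.ne' hg.ne']
    ring

lemma klDiv_nonneg_of_pmf {α : Type*} [Fintype α] (p q : α → ℝ) (hp : IsPmf p) (hq : IsPmf q)
    (hqpos : ∀ a, 0 < q a) : 0 ≤ klDiv p q := by
  have h1 : ∀ a, p a - q a ≤ p a * Real.log (p a / q a) := by
    intro a
    rcases (hp.1 a).eq_or_lt with h0 | h0
    · simp [← h0]; exact (hqpos a).le
    · have hq' := hqpos a
      have hle : Real.log (q a / p a) ≤ q a / p a - 1 :=
        Real.log_le_sub_one_of_pos (by positivity)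
      have hlog : Real.log (p a / q a) = - Real.log (q a / p a) := by
        rw [← Real.log_inv]
        congr 1
        field_simp
      have e1 : p a * (q a / p a - 1) = q a - p a := by field_simp
      have e2 : p a * Real.log (q a / p a) ≤ q a - p a := by
        rw [← e1]
        exact mul_le_mul_of_nonneg_left hle h0.le
      rw [hlog]
      nlinarith
  calc (0:ℝ) = ∑ a, (p a - q a) := by rw [Finset.sum_sub_distrib, hp.2, hq.2]; ring
    _ ≤ klDiv p q := Finset.sum_le_sum fun a _ => h1 a

/-- Lemma 4 of the paper: with `U = T × Z`, a full-support source pmf `P_U`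
on `U`, a full-support input pmf `Q` on `X`, and a strictly positive channel `W`, the
exponent `E` (with the inner minimization over the constraint sets `K_s(P̂_U)` and
`K_c(P̂_{XY})`) is lower bounded by the expression in which the inner minimization is
removed (i.e. evaluated at `P̃ = P̂`). -/
theorem stmt9 {T Z X Y : Type*} [Fintype T] [Fintype Z] [Fintype X] [Fintype Y]
    [Nonempty T] [Nonempty Z] [Nonempty X] [Nonempty Y]
    (PU : T × Z → ℝ) (hPU : IsPmf PU) (hPUpos : ∀ u, 0 < PU u)
    (Q : X → ℝ) (hQ : IsPmf Q) (hQpos : ∀ x, 0 < Q x)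
    (W : X → Y → ℝ) (hW : ∀ x, (∀ y, 0 ≤ W x y) ∧ ∑ y, W x y = 1)
    (hWpos : ∀ x y, 0 < W x y) :
    sInf {e : ℝ | ∃ (PhatU : T × Z → ℝ) (PhatXY : X × Y → ℝ),
        IsPmf PhatU ∧ IsPmf PhatXY ∧
        e = klDiv PhatU PU + klDiv PhatXY (fun a => Q a.1 * W a.1 a.2)
          + max
            (sInf {v : ℝ | ∃ (PtilU : T × Z → ℝ) (PtilXY : X × Y → ℝ),
              IsPmf PtilU ∧ IsPmf PtilXY ∧
              (∀ z, (∑ t, PtilU (t, z)) = ∑ t, PhatU (t, z)) ∧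
              (∑ u : T × Z, PtilU u * Real.log (PU u))
                ≥ (∑ u : T × Z, PhatU u * Real.log (PU u)) ∧
              (∀ y, (∑ x, PtilXY (x, y)) = ∑ x, PhatXY (x, y)) ∧
              (∑ a : X × Y, PtilXY a * Real.log (W a.1 a.2))
                ≥ (∑ a : X × Y, PhatXY a * Real.log (W a.1 a.2)) ∧
              v = klDiv PtilXY (fun a => Q a.1 * ∑ x, PhatXY (x, a.2))
                  - (ent PtilU - ent (fun z => ∑ t, PtilU (t, z)))})
            0}
    ≥ sInf {e : ℝ | ∃ (PhatU : T × Z → ℝ) (PhatXY : X × Y → ℝ),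
        IsPmf PhatU ∧ IsPmf PhatXY ∧
        e = klDiv PhatU PU + klDiv PhatXY (fun a => Q a.1 * W a.1 a.2)
          + max
            (klDiv PhatXY (fun a => Q a.1 * ∑ x, PhatXY (x, a.2))
              - (ent PhatU - ent (fun z => ∑ t, PhatU (t, z))))
            0} := by
  classical
  -- name the RHS set B
  set B : Set ℝ := {e : ℝ | ∃ (PhatU : T × Z → ℝ) (PhatXY : X × Y → ℝ),
        IsPmf PhatU ∧ IsPmf PhatXY ∧
        e = klDiv PhatU PU + klDiv PhatXY (fun a => Q a.1 * W a.1 a.2)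
          + max
            (klDiv PhatXY (fun a => Q a.1 * ∑ x, PhatXY (x, a.2))
              - (ent PhatU - ent (fun z => ∑ t, PhatU (t, z))))
            0} with hBdef
  have hQWpmf : IsPmf (fun a : X × Y => Q a.1 * W a.1 a.2) := by
    constructor
    · intro a; exact mul_nonneg (hQ.1 a.1) ((hW a.1).1 a.2)
    · rw [Fintype.sum_prod_type]
      have h1 : ∀ x, ∑ y, Q x * W x y = Q x := fun x => by
        rw [← Finset.mul_sum, (hW x).2, mul_one]
      rw [Finset.sum_congr rfl fun x _ => h1 x, hQ.2]
  have hBbdd : BddBelow B := by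
    refine ⟨0, ?_⟩
    rintro e ⟨pU, pXY, h1, h2, rfl⟩
    have k1 : 0 ≤ klDiv pU PU := klDiv_nonneg_of_pmf _ _ h1 hPU hPUpos
    have k2 : 0 ≤ klDiv pXY (fun a : X × Y => Q a.1 * W a.1 a.2) :=
      klDiv_nonneg_of_pmf _ _ h2 hQWpmf (fun a => mul_pos (hQpos a.1) (hWpos a.1 a.2))
    have k3 := le_max_right (klDiv pXY (fun a => Q a.1 * ∑ x, pXY (x, a.2))
        - (ent pU - ent (fun z => ∑ t, pU (t, z)))) (0:ℝ)
    linarith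
  -- nonemptiness of LHS set via uniform distributions
  have hunif1 : IsPmf (fun _ : T × Z => (Fintype.card (T × Z) : ℝ)⁻¹) := by
    have hc : (0:ℝ) < Fintype.card (T × Z) := by exact_mod_cast Fintype.card_pos
    constructor
    · intro a; positivity
    · rw [Finset.sum_const, Finset.card_univ, nsmul_eq_mul, mul_inv_cancel₀ hc.ne']
  have hunif2 : IsPmf (fun _ : X × Y => (Fintype.card (X × Y) : ℝ)⁻¹) := by
    have hc : (0:ℝ) < Fintype.card (X × Y) := by exact_mod_cast Fintype.card_pos
    constructor
    · intro a; positivity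
    · rw [Finset.sum_const, Finset.card_univ, nsmul_eq_mul, mul_inv_cancel₀ hc.ne']
  refine le_csInf ⟨_, (fun _ : T × Z => (Fintype.card (T × Z) : ℝ)⁻¹),
    (fun _ : X × Y => (Fintype.card (X × Y) : ℝ)⁻¹), hunif1, hunif2, rfl⟩ ?_
  rintro e ⟨PhU, PhXY, hPh1, hPh2, rfl⟩
  refine le_of_forall_pos_le_add fun ε hε => ?_
  -- the inner constraint set
  set S : Set ℝ := {v : ℝ | ∃ (PtilU : T × Z → ℝ) (PtilXY : X × Y → ℝ),
              IsPmf PtilU ∧ IsPmf PtilXY ∧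
              (∀ z, (∑ t, PtilU (t, z)) = ∑ t, PhU (t, z)) ∧
              (∑ u : T × Z, PtilU u * Real.log (PU u))
                ≥ (∑ u : T × Z, PhU u * Real.log (PU u)) ∧
              (∀ y, (∑ x, PtilXY (x, y)) = ∑ x, PhXY (x, y)) ∧
              (∑ a : X × Y, PtilXY a * Real.log (W a.1 a.2))
                ≥ (∑ a : X × Y, PhXY a * Real.log (W a.1 a.2)) ∧
              v = klDiv PtilXY (fun a => Q a.1 * ∑ x, PhXY (x, a.2))
                  - (ent PtilU - ent (fun z => ∑ t, PtilU (t, z)))} with hSdef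
  have hSne : S.Nonempty :=
    ⟨_, PhU, PhXY, hPh1, hPh2, fun z => rfl, le_refl _, fun y => rfl, le_refl _, rfl⟩
  obtain ⟨v, hvS, hvlt⟩ := Real.lt_sInf_add_pos hSne hε
  have hvlt' : v < max (sInf S) 0 + ε := lt_of_lt_of_le hvlt (by
    have := le_max_left (sInf S) (0:ℝ); linarith)
  obtain ⟨PtU, PtXY, ht1, ht2, hz, hs, hy, hw, hveq⟩ := hvS
  -- basic positivity transfer lemmas for marginals
  have hPhYpos : ∀ a : X × Y, 0 < PhXY a → 0 < ∑ x, PhXY (x, a.2) := by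
    intro a ha
    have : PhXY (a.1, a.2) ≤ ∑ x, PhXY (x, a.2) :=
      Finset.single_le_sum (fun x _ => hPh2.1 (x, a.2)) (Finset.mem_univ a.1)
    rw [Prod.mk.eta] at this
    linarith
  have hPtYpos : ∀ a : X × Y, 0 < PtXY a → 0 < ∑ x, PhXY (x, a.2) := by
    intro a ha
    have : PtXY (a.1, a.2) ≤ ∑ x, PtXY (x, a.2) :=
      Finset.single_le_sum (fun x _ => ht2.1 (x, a.2)) (Finset.mem_univ a.1)
    rw [Prod.mk.eta] at this
    rw [← hy a.2]
    linarith
  -- KL decompositions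
  have eq1 : klDiv PhU PU = ∑ u, PhU u * Real.log (PhU u) - ∑ u, PhU u * Real.log (PU u) :=
    klDiv_eq_sub _ _ hPh1.1 fun u _ => hPUpos u
  have eq2 : klDiv PtU PU = ∑ u, PtU u * Real.log (PtU u) - ∑ u, PtU u * Real.log (PU u) :=
    klDiv_eq_sub _ _ ht1.1 fun u _ => hPUpos u
  have eq3 : klDiv PhXY (fun a => Q a.1 * W a.1 a.2)
      = ∑ a, PhXY a * Real.log (PhXY a)
        - (∑ a, PhXY a * Real.log (Q a.1) + ∑ a, PhXY a * Real.log (W a.1 a.2)) :=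
    klDiv_mul_eq PhXY (fun a => Q a.1) (fun a => W a.1 a.2) hPh2.1
      (fun a _ => ⟨hQpos a.1, hWpos a.1 a.2⟩)
  have eq4 : klDiv PtXY (fun a => Q a.1 * W a.1 a.2)
      = ∑ a, PtXY a * Real.log (PtXY a)
        - (∑ a, PtXY a * Real.log (Q a.1) + ∑ a, PtXY a * Real.log (W a.1 a.2)) :=
    klDiv_mul_eq PtXY (fun a => Q a.1) (fun a => W a.1 a.2) ht2.1
      (fun a _ => ⟨hQpos a.1, hWpos a.1 a.2⟩)
  have eq5 : klDiv PhXY (fun a => Q a.1 * ∑ x, PhXY (x, a.2))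
      = ∑ a, PhXY a * Real.log (PhXY a)
        - (∑ a, PhXY a * Real.log (Q a.1)
            + ∑ a : X × Y, PhXY a * Real.log (∑ x, PhXY (x, a.2))) :=
    klDiv_mul_eq PhXY (fun a => Q a.1) (fun a => ∑ x, PhXY (x, a.2)) hPh2.1
      (fun a ha => ⟨hQpos a.1, hPhYpos a ha⟩)
  have eq6 : klDiv PtXY (fun a => Q a.1 * ∑ x, PhXY (x, a.2))
      = ∑ a, PtXY a * Real.log (PtXY a)
        - (∑ a, PtXY a * Real.log (Q a.1)
            + ∑ a : X × Y, PtXY a * Real.log (∑ x, PhXY (x, a.2))) :=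
    klDiv_mul_eq PtXY (fun a => Q a.1) (fun a => ∑ x, PhXY (x, a.2)) ht2.1
      (fun a ha => ⟨hQpos a.1, hPtYpos a ha⟩)
  -- the Y-marginal log terms coincide
  have eqR : ∑ a : X × Y, PtXY a * Real.log (∑ x, PhXY (x, a.2))
      = ∑ a : X × Y, PhXY a * Real.log (∑ x, PhXY (x, a.2)) := by
    rw [Fintype.sum_prod_type_right, Fintype.sum_prod_type_right]
    refine Finset.sum_congr rfl fun y _ => ?_
    show ∑ x, PtXY (x, y) * Real.log (∑ x', PhXY (x', y))
        = ∑ x, PhXY (x, y) * Real.log (∑ x', PhXY (x', y))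
    rw [← Finset.sum_mul, ← Finset.sum_mul, hy y]
  -- Z-marginal entropies coincide
  have eqZ : ent (fun z => ∑ t, PtU (t, z)) = ent (fun z => ∑ t, PhU (t, z)) := by
    unfold ent
    simp only [hz]
  have entPhU : ent PhU = -∑ u, PhU u * Real.log (PhU u) := rfl
  have entPtU : ent PtU = -∑ u, PtU u * Real.log (PtU u) := rfl
  -- the key exchange inequality
  have hstar : klDiv PtU PU + klDiv PtXY (fun a => Q a.1 * W a.1 a.2)
      + (klDiv PhXY (fun a => Q a.1 * ∑ x, PhXY (x, a.2))
          - (ent PhU - ent (fun z => ∑ t, PhU (t, z))))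
      ≤ klDiv PhU PU + klDiv PhXY (fun a => Q a.1 * W a.1 a.2)
      + (klDiv PtXY (fun a => Q a.1 * ∑ x, PhXY (x, a.2))
          - (ent PtU - ent (fun z => ∑ t, PtU (t, z)))) := by
    rw [eq1, eq2, eq3, eq4, eq5, eq6, eqZ, entPhU, entPtU]
    linarith [hs, hw, eqR]
  -- now produce a suitable element of B
  rcases le_or_gt (klDiv PtU PU + klDiv PtXY (fun a => Q a.1 * W a.1 a.2))
      (klDiv PhU PU + klDiv PhXY (fun a => Q a.1 * W a.1 a.2)) with hΔ | hΔ
  · -- use the tilde pair as the new hat pair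
    have hmem : klDiv PtU PU + klDiv PtXY (fun a => Q a.1 * W a.1 a.2)
        + max (klDiv PtXY (fun a => Q a.1 * ∑ x, PtXY (x, a.2))
            - (ent PtU - ent (fun z => ∑ t, PtU (t, z)))) 0 ∈ B :=
      ⟨PtU, PtXY, ht1, ht2, rfl⟩
    refine le_trans (csInf_le hBbdd hmem) ?_
    have hyfun : (fun a : X × Y => Q a.1 * ∑ x, PtXY (x, a.2))
        = fun a : X × Y => Q a.1 * ∑ x, PhXY (x, a.2) := by
      funext a; rw [hy a.2]
    rw [hyfun]
    have hcv : klDiv PtXY (fun a => Q a.1 * ∑ x, PhXY (x, a.2))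
        - (ent PtU - ent (fun z => ∑ t, PtU (t, z))) < max (sInf S) 0 + ε := by
      rw [← hveq]; exact hvlt'
    have hmax : max (klDiv PtXY (fun a => Q a.1 * ∑ x, PhXY (x, a.2))
        - (ent PtU - ent (fun z => ∑ t, PtU (t, z)))) 0 ≤ max (sInf S) 0 + ε := by
      refine max_le hcv.le ?_
      have := le_max_right (sInf S) (0:ℝ); linarith
    linarith
  · -- use the original hat pair
    have hmem : klDiv PhU PU + klDiv PhXY (fun a => Q a.1 * W a.1 a.2)
        + max (klDiv PhXY (fun a => Q a.1 * ∑ x, PhXY (x, a.2))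
            - (ent PhU - ent (fun z => ∑ t, PhU (t, z)))) 0 ∈ B :=
      ⟨PhU, PhXY, hPh1, hPh2, rfl⟩
    refine le_trans (csInf_le hBbdd hmem) ?_
    have hcv : klDiv PtXY (fun a => Q a.1 * ∑ x, PhXY (x, a.2))
        - (ent PtU - ent (fun z => ∑ t, PtU (t, z))) < max (sInf S) 0 + ε := by
      rw [← hveq]; exact hvlt'
    have hch : klDiv PhXY (fun a => Q a.1 * ∑ x, PhXY (x, a.2))
        - (ent PhU - ent (fun z => ∑ t, PhU (t, z))) < max (sInf S) 0 + ε := by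
      linarith
    have hmax : max (klDiv PhXY (fun a => Q a.1 * ∑ x, PhXY (x, a.2))
        - (ent PhU - ent (fun z => ∑ t, PhU (t, z)))) 0 ≤ max (sInf S) 0 + ε := by
      refine max_le hch.le ?_
      have := le_max_right (sInf S) (0:ℝ); linarith
    linarith
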